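/- Let (b_j)_{j≥0} be real numbers with b₀ = 1 and suppose the b-polynomial p(t) = Σ_{j=0}^{2n+1} b_{2n+1−j} t^j has 2n+1 real roots counting multiplicity, of which at least two are nonzero. Then for every σ > 0, all distinct reals u₁ < ⋯ < u_n, and every ũ ∈ ℝ, the polynomial c(u) = Σ_{k=0}^{2n+1} b_k σ^k g^{(k)}(u), where g(u) = (u−u₁)²⋯(u−u_n)²(u−ũ), has 2n+1 distinct real roots. (c(u) is the characteristic polynomial of the coefficient matrix of the n-node EQMOM moment closure system, so under this condition that system is strictly hyperbolic.) -/

import Mathlib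

open Polynomial Finset Filter Topology

private lemma crit_of_tendsto_atTop {F G : ℝ → ℝ} (hd : ∀ t, HasDerivAt F (G t) t)
    {x w : ℝ} (hxw : x < w) (hFx : F x = 0) (hFw : F w ≠ 0)
    (hT : Tendsto F atTop (𝓝 0)) : ∃ z, x < z ∧ G z = 0 := by
  have hcont : Continuous F := by
    rw [continuous_iff_continuousAt]; exact fun t => (hd t).continuousAt
  have habs : Tendsto (fun t => |F t|) atTop (𝓝 0) := by
    simpa using hT.abs
  have hev : ∀ᶠ t in atTop, |F t| < |F w| := habs.eventually_lt_const (abs_pos.mpr hFw)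
  obtain ⟨b0, hb0⟩ := hev.exists_forall_of_atTop
  set B := max b0 (w + 1) with hB
  have hwB : w < B := lt_of_lt_of_le (lt_add_one w) (le_max_right _ _)
  have hxB : x < B := hxw.trans hwB
  have hFB : |F B| < |F w| := hb0 B (le_max_left _ _)
  have hwmem : w ∈ Set.Icc x B := ⟨hxw.le, hwB.le⟩
  rcases hFw.lt_or_gt with hneg | hpos
  · -- F w < 0 : take min
    obtain ⟨c, hcmem, hc⟩ := isCompact_Icc.exists_isMinOn (Set.nonempty_Icc.mpr hxB.le)
      hcont.continuousOn
    have hcw : F c ≤ F w := hc hwmem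
    have hcx : c ≠ x := by rintro rfl; rw [hFx] at hcw; exact absurd (hcw.trans_lt hneg) (lt_irrefl 0).elim
    have hcB : c ≠ B := by
      rintro rfl
      have h2 : -|F B| ≤ F B := neg_abs_le _
      rw [abs_of_neg hneg] at hFB
      have := hc hwmem
      linarith
    have hco : c ∈ Set.Ioo x B := ⟨lt_of_le_of_ne hcmem.1 (Ne.symm hcx), lt_of_le_of_ne hcmem.2 hcB⟩
    have hloc : IsLocalMin F c := hc.isLocalMin (Icc_mem_nhds hco.1 hco.2)
    exact ⟨c, hco.1, hloc.hasDerivAt_eq_zero (hd c)⟩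
  · obtain ⟨c, hcmem, hc⟩ := isCompact_Icc.exists_isMaxOn (Set.nonempty_Icc.mpr hxB.le)
      hcont.continuousOn
    have hcw : F w ≤ F c := hc hwmem
    have hcx : c ≠ x := by rintro rfl; rw [hFx] at hcw; exact absurd (hpos.trans_le hcw) (lt_irrefl 0).elim
    have hcB : c ≠ B := by
      rintro rfl
      have h1 : F B < F w := by
        have := hFB; rw [abs_of_pos hpos] at this
        exact (abs_lt.mp this).2
      exact absurd (hcw.trans_lt h1) (lt_irrefl _).elim
    have hco : c ∈ Set.Ioo x B := ⟨lt_of_le_of_ne hcmem.1 (Ne.symm hcx), lt_of_le_of_ne hcmem.2 hcB⟩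
    have hloc : IsLocalMax F c := hc.isLocalMax (Icc_mem_nhds hco.1 hco.2)
    exact ⟨c, hco.1, hloc.hasDerivAt_eq_zero (hd c)⟩

private lemma crit_of_tendsto_atBot {F G : ℝ → ℝ} (hd : ∀ t, HasDerivAt F (G t) t)
    {x w : ℝ} (hwx : w < x) (hFx : F x = 0) (hFw : F w ≠ 0)
    (hT : Tendsto F atBot (𝓝 0)) : ∃ z, z < x ∧ G z = 0 := by
  have hd' : ∀ t, HasDerivAt (fun s => F (-s)) (G (-t) * (-1)) t := by
    intro t
    exact (hd (-t)).comp t (by simpa using (hasDerivAt_neg t))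
  have hT' : Tendsto (fun s => F (-s)) atTop (𝓝 0) := hT.comp tendsto_neg_atTop_atBot
  obtain ⟨z, hz1, hz2⟩ := crit_of_tendsto_atTop hd' (neg_lt_neg hwx) (by simpa using hFx)
    (by simpa using hFw) hT'
  exact ⟨-z, by linarith, by have := hz2; simpa using this⟩

private lemma tendsto_exp_poly_atTop (f : ℝ[X]) {a : ℝ} (ha : 0 < a) :
    Tendsto (fun t => Real.exp (-(t / a)) * f.eval t) atTop (𝓝 0) := by
  have h1 : Tendsto (fun t : ℝ => t / a) atTop atTop := tendsto_id.atTop_div_const ha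
  have h3 := (f.comp (C a * X)).tendsto_div_exp_atTop.comp h1
  refine h3.congr fun t => ?_
  simp only [Function.comp_apply, eval_comp, eval_mul, eval_C, eval_X,
    Real.exp_neg, div_eq_mul_inv]
  rw [show a * (t * a⁻¹) = t by field_simp, mul_comm]

private lemma tendsto_exp_poly_atBot (f : ℝ[X]) {a : ℝ} (ha : a < 0) :
    Tendsto (fun t => Real.exp (-(t / a)) * f.eval t) atBot (𝓝 0) := by
  have h := (tendsto_exp_poly_atTop (f.comp (-X)) (neg_pos.mpr ha)).comp tendsto_neg_atBot_atTop
  refine h.congr fun t => ?_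
  have h1 : -t / -a = t / a := neg_div_neg_eq t a
  simp only [Function.comp_apply, eval_comp, eval_neg, eval_X, h1, neg_neg]

private lemma fresh_root_pos (f : ℝ[X]) (hf0 : f ≠ 0) {a : ℝ} (ha : 0 < a) {x : ℝ}
    (hx : f.IsRoot x) :
    ∃ z, x < z ∧ (f - C a * derivative f).IsRoot z ∧
      ∀ y, f.IsRoot y → ¬(x < y ∧ y ≤ z) := by
  classical
  set h := f - C a * derivative f with hh
  set F : ℝ → ℝ := fun t => Real.exp (-(t / a)) * f.eval t with hF
  have hder : ∀ t, HasDerivAt F (-(1 / a) * Real.exp (-(t / a)) * h.eval t) t := by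
    intro t
    have h1 : HasDerivAt (fun s : ℝ => -(s / a)) (-(1 / a)) t := by
      exact ((hasDerivAt_id t).div_const a).neg
    have h2 : HasDerivAt (fun s => Real.exp (-(s / a))) (Real.exp (-(t / a)) * (-(1 / a))) t :=
      (Real.hasDerivAt_exp _).comp t h1
    have h3 : HasDerivAt F _ t := h2.mul (f.hasDerivAt t)
    have ha0 : a ≠ 0 := by intro h0; simp [h0] at ha
    convert h3 using 1
    simp only [hh, eval_sub, eval_mul, eval_C]
    field_simp
    ring
  have hroot_of : ∀ z, -(1 / a) * Real.exp (-(z / a)) * h.eval z = 0 → h.IsRoot z := by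
    intro z hz
    have e2 : -(1 / a) * Real.exp (-(z / a)) ≠ 0 :=
      mul_ne_zero (neg_ne_zero.mpr (one_div_ne_zero ha.ne')) (Real.exp_ne_zero _)
    exact (mul_eq_zero.mp hz).resolve_left e2
  have hFx : F x = 0 := by simp [hF, show f.eval x = 0 from hx]
  by_cases hup : ∃ y, f.IsRoot y ∧ x < y
  · have hsne : (f.roots.toFinset.filter (fun y => x < y)).Nonempty := by
      obtain ⟨y, hy1, hy2⟩ := hup
      exact ⟨y, by rw [mem_filter, Multiset.mem_toFinset, mem_roots hf0]; exact ⟨hy1, hy2⟩⟩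
    obtain ⟨x', ⟨hx'root, hxx'⟩, hx'min⟩ :
        ∃ x', (f.IsRoot x' ∧ x < x') ∧
          ∀ y, f.IsRoot y → x < y → x' ≤ y := by
      refine ⟨(f.roots.toFinset.filter (fun y => x < y)).min' hsne, ?_,
        fun y hy1 hy2 => Finset.min'_le _ y ?_⟩
      · have := Finset.min'_mem _ hsne
        rw [mem_filter, Multiset.mem_toFinset, mem_roots hf0] at this
        exact this
      · rw [mem_filter, Multiset.mem_toFinset, mem_roots hf0]; exact ⟨hy1, hy2⟩
    have hFx' : F x' = 0 := by simp [hF, show f.eval x' = 0 from hx'root]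
    have hcont : Continuous F := by
      rw [continuous_iff_continuousAt]; exact fun t => (hder t).continuousAt
    obtain ⟨z, hz, hz0⟩ := exists_deriv_eq_zero hxx' hcont.continuousOn
      (hFx.trans hFx'.symm)
    refine ⟨z, hz.1, hroot_of z (by rw [← (hder z).deriv]; exact hz0), ?_⟩
    rintro y hy ⟨hy1, hy2⟩
    have := hx'min y hy hy1
    have hzx' : z < x' := hz.2
    linarith
  · push_neg at hup
    have hfin := f.finite_setOf_isRoot hf0
    obtain ⟨w, hw1, hw2⟩ : ∃ w, x < w ∧ ¬f.IsRoot w := by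
      obtain ⟨w, hw⟩ := ((Set.Ioi_infinite x).diff hfin).nonempty
      exact ⟨w, hw.1, hw.2⟩
    have hFw : F w ≠ 0 := mul_ne_zero (Real.exp_ne_zero _) hw2
    obtain ⟨z, hz1, hz2⟩ := crit_of_tendsto_atTop hder hw1 hFx hFw (tendsto_exp_poly_atTop f ha)
    exact ⟨z, hz1, hroot_of z hz2, fun y hy hcon => absurd hcon.1 (not_lt.mpr (hup y hy))⟩

private lemma fresh_root_neg (f : ℝ[X]) (hf0 : f ≠ 0) {a : ℝ} (ha : a < 0) {x : ℝ}
    (hx : f.IsRoot x) :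
    ∃ z, z < x ∧ (f - C a * derivative f).IsRoot z ∧
      ∀ y, f.IsRoot y → ¬(z ≤ y ∧ y < x) := by
  classical
  set h := f - C a * derivative f with hh
  set F : ℝ → ℝ := fun t => Real.exp (-(t / a)) * f.eval t with hF
  have hder : ∀ t, HasDerivAt F (-(1 / a) * Real.exp (-(t / a)) * h.eval t) t := by
    intro t
    have h1 : HasDerivAt (fun s : ℝ => -(s / a)) (-(1 / a)) t := by
      exact ((hasDerivAt_id t).div_const a).neg
    have h2 : HasDerivAt (fun s => Real.exp (-(s / a))) (Real.exp (-(t / a)) * (-(1 / a))) t :=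
      (Real.hasDerivAt_exp _).comp t h1
    have h3 : HasDerivAt F _ t := h2.mul (f.hasDerivAt t)
    have ha0 : a ≠ 0 := by intro h0; simp [h0] at ha
    convert h3 using 1
    simp only [hh, eval_sub, eval_mul, eval_C]
    field_simp
    ring
  have hroot_of : ∀ z, -(1 / a) * Real.exp (-(z / a)) * h.eval z = 0 → h.IsRoot z := by
    intro z hz
    have e2 : -(1 / a) * Real.exp (-(z / a)) ≠ 0 :=
      mul_ne_zero (neg_ne_zero.mpr (one_div_ne_zero ha.ne)) (Real.exp_ne_zero _)
    exact (mul_eq_zero.mp hz).resolve_left e2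
  have hFx : F x = 0 := by simp [hF, show f.eval x = 0 from hx]
  by_cases hup : ∃ y, f.IsRoot y ∧ y < x
  · have hsne : (f.roots.toFinset.filter (fun y => y < x)).Nonempty := by
      obtain ⟨y, hy1, hy2⟩ := hup
      exact ⟨y, by rw [mem_filter, Multiset.mem_toFinset, mem_roots hf0]; exact ⟨hy1, hy2⟩⟩
    obtain ⟨x', ⟨hx'root, hxx'⟩, hx'max⟩ :
        ∃ x', (f.IsRoot x' ∧ x' < x) ∧
          ∀ y, f.IsRoot y → y < x → y ≤ x' := by
      refine ⟨(f.roots.toFinset.filter (fun y => y < x)).max' hsne, ?_,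
        fun y hy1 hy2 => Finset.le_max' _ y ?_⟩
      · have := Finset.max'_mem _ hsne
        rw [mem_filter, Multiset.mem_toFinset, mem_roots hf0] at this
        exact this
      · rw [mem_filter, Multiset.mem_toFinset, mem_roots hf0]; exact ⟨hy1, hy2⟩
    have hFx' : F x' = 0 := by simp [hF, show f.eval x' = 0 from hx'root]
    have hcont : Continuous F := by
      rw [continuous_iff_continuousAt]; exact fun t => (hder t).continuousAt
    obtain ⟨z, hz, hz0⟩ := exists_deriv_eq_zero hxx' hcont.continuousOn
      (hFx'.trans hFx.symm)
    refine ⟨z, hz.2, hroot_of z (by rw [← (hder z).deriv]; exact hz0), ?_⟩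
    rintro y hy ⟨hy1, hy2⟩
    have := hx'max y hy hy2
    have hzx' : x' < z := hz.1
    linarith
  · push_neg at hup
    have hfin := f.finite_setOf_isRoot hf0
    obtain ⟨w, hw1, hw2⟩ : ∃ w, w < x ∧ ¬f.IsRoot w := by
      obtain ⟨w, hw⟩ := ((Set.Iio_infinite x).diff hfin).nonempty
      exact ⟨w, hw.1, hw.2⟩
    have hFw : F w ≠ 0 := mul_ne_zero (Real.exp_ne_zero _) hw2
    obtain ⟨z, hz1, hz2⟩ := crit_of_tendsto_atBot hder hw1 hFx hFw (tendsto_exp_poly_atBot f ha)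
    exact ⟨z, hz1, hroot_of z hz2, fun y hy hcon => absurd hcon.2 (not_lt.mpr (hup y hy))⟩

private lemma assemble_pos {h : ℝ[X]} (R : Finset ℝ)
    (hz : ∀ x ∈ R, ∃ z, x < z ∧ h.IsRoot z ∧ ∀ y ∈ R, ¬(x < y ∧ y ≤ z)) :
    ∃ S : Finset ℝ, S.card = R.card ∧ Disjoint S R ∧ ∀ z ∈ S, h.IsRoot z := by
  classical
  choose! zf h1 h2 h3 using hz
  have hmono : ∀ x ∈ R, ∀ y ∈ R, x < y → zf x < zf y := by
    intro x hx y hy hlt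
    have h5 : zf x < y := lt_of_not_ge (fun hle => h3 x hx y hy ⟨hlt, hle⟩)
    exact h5.trans (h1 y hy)
  refine ⟨R.image zf, ?_, ?_, ?_⟩
  · refine Finset.card_image_of_injOn ?_
    intro x hx y hy hxy
    by_contra hne
    rcases lt_or_gt_of_ne hne with hlt | hlt
    · exact absurd hxy (hmono x hx y hy hlt).ne
    · exact absurd hxy.symm (hmono y hy x hx hlt).ne
  · rw [Finset.disjoint_left]
    rintro z hzmem hzR
    obtain ⟨x, hx, rfl⟩ := Finset.mem_image.mp hzmem
    exact h3 x hx (zf x) hzR ⟨h1 x hx, le_rfl⟩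
  · rintro z hzmem
    obtain ⟨x, hx, rfl⟩ := Finset.mem_image.mp hzmem
    exact h2 x hx

private lemma assemble_neg {h : ℝ[X]} (R : Finset ℝ)
    (hz : ∀ x ∈ R, ∃ z, z < x ∧ h.IsRoot z ∧ ∀ y ∈ R, ¬(z ≤ y ∧ y < x)) :
    ∃ S : Finset ℝ, S.card = R.card ∧ Disjoint S R ∧ ∀ z ∈ S, h.IsRoot z := by
  classical
  choose! zf h1 h2 h3 using hz
  have hmono : ∀ x ∈ R, ∀ y ∈ R, y < x → zf y < zf x := by
    intro x hx y hy hlt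
    have h5 : y < zf x := lt_of_not_ge (fun hle => h3 x hx y hy ⟨hle, hlt⟩)
    exact (h1 y hy).trans h5
  refine ⟨R.image zf, ?_, ?_, ?_⟩
  · refine Finset.card_image_of_injOn ?_
    intro x hx y hy hxy
    by_contra hne
    rcases lt_or_gt_of_ne hne with hlt | hlt
    · exact absurd hxy.symm (hmono y hy x hx hlt).ne'
    · exact absurd hxy (hmono x hx y hy hlt).ne'
  · rw [Finset.disjoint_left]
    rintro z hzmem hzR
    obtain ⟨x, hx, rfl⟩ := Finset.mem_image.mp hzmem
    exact h3 x hx (zf x) hzR ⟨le_rfl, h1 x hx⟩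
  · rintro z hzmem
    obtain ⟨x, hx, rfl⟩ := Finset.mem_image.mp hzmem
    exact h2 x hx

private lemma sum_rootMult_le {h : ℝ[X]} (t : Finset ℝ) :
    ∑ x ∈ t, h.rootMultiplicity x ≤ Multiset.card h.roots := by
  classical
  have h1 : ∑ x ∈ t, h.rootMultiplicity x = ∑ x ∈ t, h.roots.count x := by
    refine Finset.sum_congr rfl fun x _ => (count_roots h).symm
  rw [h1]
  have h2 : ∑ x ∈ t, h.roots.count x = ∑ x ∈ t ∩ h.roots.toFinset, h.roots.count x := by
    refine (Finset.sum_subset (Finset.inter_subset_left) ?_).symm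
    intro x hx hnx
    by_contra hc
    have hpos : 0 < h.roots.count x := Nat.pos_of_ne_zero hc
    exact hnx (Finset.mem_inter.mpr ⟨hx,
      Multiset.mem_toFinset.mpr (Multiset.count_pos.mp hpos)⟩)
  rw [h2, ← Multiset.toFinset_sum_count_eq h.roots]
  exact Finset.sum_le_sum_of_subset Finset.inter_subset_right

private lemma step {f : ℝ[X]} (hf0 : f ≠ 0) (hs : f.Splits) {a : ℝ}
    (ha : a ≠ 0) :
    f - C a * derivative f ≠ 0 ∧
    (f - C a * derivative f).natDegree = f.natDegree ∧
    (f - C a * derivative f).Splits ∧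
    ∀ x, 2 ≤ (f - C a * derivative f).rootMultiplicity x →
      f.rootMultiplicity x = (f - C a * derivative f).rootMultiplicity x + 1 := by
  classical
  by_cases hd0 : f.natDegree = 0
  · obtain ⟨cc, hcc⟩ := natDegree_eq_zero.mp hd0
    have hder : derivative f = 0 := by rw [← hcc]; simp
    rw [hder, mul_zero, sub_zero]
    refine ⟨hf0, rfl, hs, fun x hx => ?_⟩
    exfalso
    rw [← hcc, rootMultiplicity_C] at hx
    omega
  have hd1 : 0 < f.natDegree := Nat.pos_of_ne_zero hd0
  set h := f - C a * derivative f with hh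
  have hcoeff : h.coeff f.natDegree = f.leadingCoeff := by
    rw [hh, coeff_sub, coeff_C_mul, coeff_derivative,
      coeff_eq_zero_of_natDegree_lt (lt_add_one f.natDegree)]
    simp only [zero_mul, mul_zero, sub_zero, coeff_natDegree]
  have hlc : f.leadingCoeff ≠ 0 := leadingCoeff_ne_zero.mpr hf0
  have hne : h ≠ 0 := fun h0 => hlc (by rw [← hcoeff, h0, coeff_zero])
  have hdegle : h.natDegree ≤ f.natDegree := by
    refine le_trans (natDegree_sub_le _ _) ?_
    simp only [max_le_iff]
    exact ⟨le_rfl,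
      le_trans (natDegree_C_mul_le _ _) (le_trans (natDegree_derivative_le f) (Nat.sub_le _ _))⟩
  have hdeg : h.natDegree = f.natDegree :=
    le_antisymm hdegle (le_natDegree_of_ne_zero (by rw [hcoeff]; exact hlc))
  have hf' : derivative f ≠ 0 := by
    intro h0
    have := natDegree_eq_zero_of_derivative_eq_zero h0
    omega
  have hCa : C a ≠ 0 := fun h0 => ha (by simpa using h0)
  have hdrop : ∀ x : ℝ, f.IsRoot x →
      h.rootMultiplicity x + 1 = f.rootMultiplicity x := by
    intro x hx
    have hm1 : 1 ≤ f.rootMultiplicity x := (rootMultiplicity_pos hf0).mpr hx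
    have hderm : (derivative f).rootMultiplicity x = f.rootMultiplicity x - 1 :=
      derivative_rootMultiplicity_of_root hx
    have hub : ¬ (f.rootMultiplicity x ≤ h.rootMultiplicity x) := by
      rw [le_rootMultiplicity_iff hne]
      intro hdvd
      have h1 : (X - C x) ^ f.rootMultiplicity x ∣ f := pow_rootMultiplicity_dvd f x
      have h2 : (X - C x) ^ f.rootMultiplicity x ∣ C a * derivative f := by
        have h2' := dvd_sub h1 hdvd
        simpa [hh, sub_sub_cancel] using h2'
      have h3 : f.rootMultiplicity x ≤ (C a * derivative f).rootMultiplicity x :=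
        (le_rootMultiplicity_iff (mul_ne_zero hCa hf')).mpr h2
      rw [rootMultiplicity_mul (mul_ne_zero hCa hf'), rootMultiplicity_C, hderm] at h3
      omega
    have hlb : f.rootMultiplicity x - 1 ≤ h.rootMultiplicity x := by
      rw [le_rootMultiplicity_iff hne, hh]
      refine dvd_sub ?_ ?_
      · exact dvd_trans (pow_dvd_pow _ (Nat.sub_le _ _)) (pow_rootMultiplicity_dvd f x)
      · exact Dvd.dvd.mul_left (by rw [← hderm]; exact pow_rootMultiplicity_dvd _ x) _
    omega
  set R := f.roots.toFinset with hR
  have hmemR : ∀ x, x ∈ R ↔ f.IsRoot x := fun x => by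
    rw [hR, Multiset.mem_toFinset, mem_roots hf0]
  have hsumf : ∑ x ∈ R, f.rootMultiplicity x = f.natDegree := by
    rw [← splits_iff_card_roots.mp hs, ← Multiset.toFinset_sum_count_eq f.roots]
    exact Finset.sum_congr rfl fun x _ => (count_roots f).symm
  have hRcard : R.card ≤ f.natDegree := by
    calc R.card = ∑ x ∈ R, 1 := by simp
    _ ≤ ∑ x ∈ R, f.rootMultiplicity x := Finset.sum_le_sum fun x hx =>
        (rootMultiplicity_pos hf0).mpr ((hmemR x).mp hx)
    _ = f.natDegree := hsumf
  obtain ⟨S, hScard, hSdisj, hSroot⟩ :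
      ∃ S : Finset ℝ, S.card = R.card ∧ Disjoint S R ∧ ∀ z ∈ S, h.IsRoot z := by
    rcases ha.lt_or_gt with hneg | hpos
    · refine assemble_neg R fun x hx => ?_
      obtain ⟨z, hz1, hz2, hz3⟩ := fresh_root_neg f hf0 hneg ((hmemR x).mp hx)
      exact ⟨z, hz1, hz2, fun y hy => hz3 y ((hmemR y).mp hy)⟩
    · refine assemble_pos R fun x hx => ?_
      obtain ⟨z, hz1, hz2, hz3⟩ := fresh_root_pos f hf0 hpos ((hmemR x).mp hx)
      exact ⟨z, hz1, hz2, fun y hy => hz3 y ((hmemR y).mp hy)⟩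
  have hsumRh : ∑ x ∈ R, h.rootMultiplicity x + R.card = f.natDegree := by
    calc ∑ x ∈ R, h.rootMultiplicity x + R.card
        = ∑ x ∈ R, (h.rootMultiplicity x + 1) := by
          rw [Finset.sum_add_distrib, Finset.sum_const, smul_eq_mul, mul_one]
      _ = ∑ x ∈ R, f.rootMultiplicity x :=
          Finset.sum_congr rfl fun x hx => hdrop x ((hmemR x).mp hx)
      _ = f.natDegree := hsumf
  have hsumS : R.card ≤ ∑ x ∈ S, h.rootMultiplicity x := by
    calc R.card = ∑ _x ∈ S, 1 := by simp [hScard]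
    _ ≤ _ := Finset.sum_le_sum fun x hx => (rootMultiplicity_pos hne).mpr (hSroot x hx)
  have hcard_le : Multiset.card h.roots ≤ f.natDegree := by
    rw [← hdeg]; exact card_roots' h
  have hsumUnion : ∑ x ∈ R ∪ S, h.rootMultiplicity x
      = ∑ x ∈ R, h.rootMultiplicity x + ∑ x ∈ S, h.rootMultiplicity x := by
    rw [Finset.union_comm, Finset.sum_union hSdisj, add_comm]
  have h4 := sum_rootMult_le (h := h) (R ∪ S)
  have hcardroots : Multiset.card h.roots = f.natDegree := by omega
  have hsplits : h.Splits :=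
    splits_iff_card_roots.mpr (by rw [hcardroots, hdeg])
  refine ⟨hne, hdeg, hsplits, ?_⟩
  intro x hx2
  by_cases hxR : x ∈ R
  · have := hdrop x ((hmemR x).mp hxR); omega
  exfalso
  by_cases hxS : x ∈ S
  · have h1 : ∑ y ∈ S, h.rootMultiplicity y
        = ∑ y ∈ S.erase x, h.rootMultiplicity y + h.rootMultiplicity x :=
      (Finset.sum_erase_add S _ hxS).symm
    have h2 : (S.erase x).card = S.card - 1 := Finset.card_erase_of_mem hxS
    have h3 : S.card - 1 ≤ ∑ y ∈ S.erase x, h.rootMultiplicity y := by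
      calc S.card - 1 = ∑ _y ∈ S.erase x, 1 := by simp [h2]
      _ ≤ _ := Finset.sum_le_sum fun y hy => (rootMultiplicity_pos hne).mpr
          (hSroot y (Finset.mem_of_mem_erase hy))
    have hS1 : 0 < S.card := Finset.card_pos.mpr ⟨x, hxS⟩
    omega
  · have h5 : ∑ y ∈ insert x (R ∪ S), h.rootMultiplicity y
        = h.rootMultiplicity x + ∑ y ∈ R ∪ S, h.rootMultiplicity y :=
      Finset.sum_insert (by simp [hxR, hxS])
    have h6 := sum_rootMult_le (h := h) (insert x (R ∪ S))
    omega

private def GoodP (N : ℕ) (f : ℝ[X]) (k : ℕ) : Prop :=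
  f ≠ 0 ∧ f.Splits ∧ f.natDegree = N ∧ ∀ x, f.rootMultiplicity x ≤ k

private lemma GoodP.mono {N : ℕ} {f : ℝ[X]} {k k' : ℕ} (h : GoodP N f k) (hk : k ≤ k') :
    GoodP N f k' :=
  ⟨h.1, h.2.1, h.2.2.1, fun x => le_trans (h.2.2.2 x) hk⟩

private lemma GoodP.step {N : ℕ} {f : ℝ[X]} {k : ℕ} (hg : GoodP N f (k + 1)) {a : ℝ}
    (ha : a ≠ 0) : GoodP N (f - C a * derivative f) (max k 1) := by
  obtain ⟨h1, h2, h3, h4⟩ := _root_.step hg.1 hg.2.1 ha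
  refine ⟨h1, h3, by rw [h2, hg.2.2.1], ?_⟩
  intro x
  by_cases h5 : 2 ≤ (f - C a * derivative f).rootMultiplicity x
  · have h6 := h4 x h5
    have h7 := hg.2.2.2 x
    exact le_max_of_le_left (by omega)
  · exact le_max_of_le_right (by omega)

private noncomputable def Dend : Module.End ℝ (Polynomial ℝ) := Polynomial.derivative

private lemma aeval_linfactor (a : ℝ) (f : ℝ[X]) :
    (Polynomial.aeval Dend) (1 - C a * X) f = f - C a * derivative f := by
  have h1 : (Polynomial.aeval Dend) (1 - C a * X) =
      1 - (algebraMap ℝ (Module.End ℝ (Polynomial ℝ)) a) * Dend := by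
    rw [map_sub, map_one, map_mul, aeval_C, aeval_X]
  rw [h1]
  rw [LinearMap.sub_apply, Module.End.one_apply, Module.End.mul_apply]
  congr 1
  rw [Module.algebraMap_end_apply, smul_eq_C_mul]
  rfl

private lemma iter (N : ℕ) (M : Multiset ℝ) :
    ∀ (f : ℝ[X]) (k : ℕ), 1 ≤ k → GoodP N f k →
      GoodP N ((Polynomial.aeval Dend (M.map (fun a => 1 - C a * X)).prod) f)
        (max (k - Multiset.card (M.filter (· ≠ 0))) 1) := by
  classical
  induction M using Multiset.induction with
  | empty =>
    intro f k hk hG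
    simpa using hG.mono (by omega)
  | cons a M ih =>
    intro f k hk hG
    have hstep := ih f k hk hG
    rw [Multiset.map_cons, Multiset.prod_cons, map_mul, Module.End.mul_apply, aeval_linfactor]
    set f' := (Polynomial.aeval Dend (M.map (fun a => 1 - C a * X)).prod) f with hf'
    set c := Multiset.card (M.filter (· ≠ 0)) with hc
    by_cases ha : a = 0
    · subst ha
      rw [show ((0 : ℝ) ::ₘ M).filter (· ≠ 0) = M.filter (· ≠ 0) from
        Multiset.filter_cons_of_neg _ (by simp)]
      simpa using hstep
    · have h2 := GoodP.step (hstep.mono (by omega : max (k - c) 1 ≤ (max (k - c) 1 - 1) + 1)) ha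
      refine h2.mono ?_
      rw [show ((a : ℝ) ::ₘ M).filter (· ≠ 0) = a ::ₘ M.filter (· ≠ 0) from
        Multiset.filter_cons_of_pos _ (by simpa using ha)]
      rw [Multiset.card_cons]
      omega

private lemma aeval_monomial_apply (cc : ℝ) (k : ℕ) (g : ℝ[X]) :
    (Polynomial.aeval Dend) (C cc * X ^ k) g = C cc * derivative^[k] g := by
  rw [map_mul, map_pow, aeval_X, aeval_C, Module.End.mul_apply, Module.End.pow_apply,
    Module.algebraMap_end_apply, smul_eq_C_mul]
  rfl

private lemma reverse_X_sub_C (a : ℝ) : (X - C a).reverse = 1 - C a * X := by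
  have h1 : (X : ℝ[X]) - C a = X + C (-a) := by rw [map_neg]; ring
  have hrev1 : (1 : ℝ[X]).reverse = 1 := by simpa using reverse_C (1 : ℝ)
  have hrevX : (X : ℝ[X]).reverse = 1 := by
    have := reverse_mul_X (1 : ℝ[X])
    rwa [one_mul, hrev1] at this
  rw [h1, reverse_add_C, hrevX, natDegree_X, pow_one, map_neg]
  ring

private lemma reverse_prod_XsubC (M : Multiset ℝ) :
    ((M.map fun a : ℝ => X - C a).prod).reverse = (M.map fun a : ℝ => 1 - C a * X).prod := by
  induction M using Multiset.induction with
  | empty =>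
    simpa using reverse_C (1 : ℝ)
  | cons a M ih =>
    rw [Multiset.map_cons, Multiset.prod_cons, reverse_mul_of_domain, ih,
      Multiset.map_cons, Multiset.prod_cons, reverse_X_sub_C]

/-- Suppose `b₀ = 1` and the b-polynomial
`p(t) = Σ_{j=0}^{2n+1} b_{2n+1−j} t^j` has `2n+1` real roots counting multiplicity,
at least two of which are nonzero. Then for every `σ > 0`, distinct `u₁ < ⋯ < u_n`
and `ũ ∈ ℝ`, the polynomial `c(u) = Σ_{k=0}^{2n+1} b_k σ^k g⁽ᵏ⁾(u)`, where
`g(u) = (u−u₁)²⋯(u−u_n)²(u−ũ)`, has `2n+1` distinct real roots (so the `n`-node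
EQMOM moment system is strictly hyperbolic). -/
theorem eqmom_strict_hyperbolicity_of_b_polynomial
    (n : ℕ) (hn : 1 ≤ n) (b : ℕ → ℝ) (hb0 : b 0 = 1)
    (p : Polynomial ℝ)
    (hp : p = ∑ j ∈ Finset.range (2 * n + 2), C (b (2 * n + 1 - j)) * X ^ j)
    (hreal : p.roots.card = 2 * n + 1)
    (hnz : 2 ≤ (p.roots.filter (· ≠ 0)).card)
    (σ : ℝ) (hσ : 0 < σ) (u : Fin n → ℝ) (hu : StrictMono u) (ut : ℝ)
    (g c : Polynomial ℝ)
    (hg : g = (∏ i, (X - C (u i)) ^ 2) * (X - C ut))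
    (hc : c = ∑ k ∈ Finset.range (2 * n + 2), C (b k * σ ^ k) * derivative^[k] g) :
    c.roots.card = 2 * n + 1 ∧ c.roots.Nodup := by
  classical
  -- coefficients of p
  have hpcoeff : ∀ j, j ≤ 2 * n + 1 → p.coeff j = b (2 * n + 1 - j) := by
    intro j hj
    rw [hp, finset_sum_coeff,
      Finset.sum_eq_single j (fun i _ hij => by
        rw [coeff_C_mul, coeff_X_pow, if_neg (fun h => hij h.symm), mul_zero])
        (fun hj2 => absurd (Finset.mem_range.mpr (by omega)) hj2),
      coeff_C_mul, coeff_X_pow, if_pos rfl, mul_one]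
  have hlead : p.coeff (2 * n + 1) = 1 := by
    rw [hpcoeff _ le_rfl, Nat.sub_self, hb0]
  have hpdeg : p.natDegree = 2 * n + 1 := by
    refine le_antisymm ?_ (le_natDegree_of_ne_zero (by rw [hlead]; exact one_ne_zero))
    rw [hp]
    refine natDegree_sum_le_of_forall_le _ _ fun j hj => ?_
    refine le_trans (natDegree_C_mul_le _ _) ?_
    rw [natDegree_X_pow]
    have := Finset.mem_range.mp hj
    omega
  have hp0 : p ≠ 0 := fun h0 => by
    rw [h0, coeff_zero] at hlead; exact one_ne_zero hlead.symm
  have hmonic : p.Monic := by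
    have : p.leadingCoeff = 1 := by rw [leadingCoeff, hpdeg]; exact hlead
    exact this
  have hsplits : p.Splits := splits_iff_card_roots.mpr (by rw [hreal, hpdeg])
  have hprod : p = (p.roots.map fun a => X - C a).prod :=
    hsplits.eq_prod_roots_of_monic hmonic
  -- the reversed polynomial
  have hrev1 : p.reverse = ∑ k ∈ Finset.range (2 * n + 2), C (b k) * X ^ k := by
    ext m
    rw [coeff_reverse, finset_sum_coeff]
    by_cases hm : m ≤ 2 * n + 1
    · rw [hpdeg, revAt_le hm, hpcoeff (2 * n + 1 - m) (by omega),
        Finset.sum_eq_single m (fun i _ him => by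
          rw [coeff_C_mul, coeff_X_pow, if_neg (fun hh => him hh.symm), mul_zero])
          (fun hm2 => absurd (Finset.mem_range.mpr (by omega)) hm2),
        coeff_C_mul, coeff_X_pow, if_pos rfl, mul_one]
      congr 1
      omega
    · rw [hpdeg, revAt_eq_self_of_lt (by omega), coeff_eq_zero_of_natDegree_lt (by omega)]
      symm
      refine Finset.sum_eq_zero fun i hi => ?_
      rw [coeff_C_mul, coeff_X_pow, if_neg (by rw [Finset.mem_range] at hi; omega), mul_zero]
  set A := (Polynomial.aeval (C σ * X : ℝ[X]) : ℝ[X] →ₐ[ℝ] ℝ[X]) with hA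
  set Mσ : Multiset ℝ := p.roots.map (fun a => a * σ) with hMσ
  have hArev : A p.reverse = (Mσ.map (fun a => 1 - C a * X)).prod := by
    have h1 : p.reverse = (p.roots.map fun a => 1 - C a * X).prod := by
      conv_lhs => rw [hprod]
      exact reverse_prod_XsubC _
    rw [h1, map_multiset_prod, Multiset.map_map, hMσ, Multiset.map_map]
    refine congrArg _ (Multiset.map_congr rfl fun a _ => ?_)
    show A (1 - C a * X) = 1 - C (a * σ) * X
    rw [map_sub, map_one, map_mul, aeval_C, aeval_X, Polynomial.algebraMap_eq, C_mul]
    ring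
  have hq : A p.reverse = ∑ k ∈ Finset.range (2 * n + 2), C (b k * σ ^ k) * X ^ k := by
    rw [hrev1, map_sum]
    refine Finset.sum_congr rfl fun k _ => ?_
    rw [map_mul, map_pow, aeval_C, aeval_X, Polynomial.algebraMap_eq, mul_pow, ← C_pow,
      ← mul_assoc, ← C_mul]
  -- identify c
  have hceq : c = (Polynomial.aeval Dend ((Mσ.map (fun a => 1 - C a * X)).prod)) g := by
    rw [← hArev, hq, map_sum, LinearMap.sum_apply, hc]
    exact Finset.sum_congr rfl fun k _ => (aeval_monomial_apply _ _ g).symm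
  -- GoodP for g
  have hprodmonic : (∏ i, (X - C (u i)) ^ 2 : ℝ[X]).Monic :=
    monic_prod_of_monic _ _ fun i _ => (monic_X_sub_C (u i)).pow 2
  have hgmonic : g.Monic := by
    rw [hg]; exact hprodmonic.mul (monic_X_sub_C ut)
  have hg0 : g ≠ 0 := hgmonic.ne_zero
  have hne1 : (∏ i, (X - C (u i)) ^ 2 : ℝ[X]) ≠ 0 := hprodmonic.ne_zero
  have hgdeg : g.natDegree = 2 * n + 1 := by
    rw [hg, hprodmonic.natDegree_mul (monic_X_sub_C ut), natDegree_X_sub_C,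
      natDegree_prod _ _ (fun i _ => pow_ne_zero 2 (X_sub_C_ne_zero (u i)))]
    have h2 : ∀ i : Fin n, ((X - C (u i)) ^ 2).natDegree = 2 := fun i => by
      rw [natDegree_pow, natDegree_X_sub_C, mul_one]
    rw [Finset.sum_congr rfl fun i _ => h2 i, Finset.sum_const, Finset.card_univ,
      Fintype.card_fin, smul_eq_mul]
    ring
  have hgsplits : g.Splits := by
    rw [hg]
    exact Splits.mul (Splits.prod fun i _ => (Splits.X_sub_C _).pow 2)
      (Splits.X_sub_C _)
  have hgmult : ∀ x, g.rootMultiplicity x ≤ 3 := by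
    intro x
    rw [← count_roots, hg, roots_mul (mul_ne_zero hne1 (X_sub_C_ne_zero ut)),
      Multiset.count_add]
    have hcount1 : Multiset.count x (∏ i, (X - C (u i)) ^ 2 : ℝ[X]).roots ≤ 2 := by
      rw [roots_prod _ _ hne1, Multiset.count_bind]
      have heq : (Finset.univ.val.map fun i => Multiset.count x ((X - C (u i)) ^ 2).roots).sum
          = ∑ i : Fin n, (if x = u i then 2 else 0) := by
        refine Finset.sum_congr rfl fun i _ => ?_
        rw [roots_pow, roots_X_sub_C, Multiset.count_nsmul, Multiset.count_singleton]
        by_cases h : x = u i <;> simp [h]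
      rw [heq]
      by_cases hex : ∃ i, x = u i
      · obtain ⟨i0, hi0⟩ := hex
        rw [Finset.sum_eq_single i0 (fun j _ hji =>
          if_neg fun hj => hji (hu.injective (hj.symm.trans hi0)))
          (fun h => absurd (Finset.mem_univ i0) h), if_pos hi0]
      · rw [Finset.sum_eq_zero fun j _ => if_neg fun hj => hex ⟨j, hj⟩]
        omega
    have hcount2 : Multiset.count x (X - C ut).roots ≤ 1 := by
      rw [roots_X_sub_C, Multiset.count_singleton]
      split <;> omega
    omega
  have hGg : GoodP (2 * n + 1) g 3 := ⟨hg0, hgsplits, hgdeg, hgmult⟩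
  -- at least two nonzero elements in Mσ
  have hMcard : 2 ≤ Multiset.card (Mσ.filter (· ≠ 0)) := by
    rw [hMσ, Multiset.filter_map, Multiset.card_map]
    refine le_trans hnz (le_of_eq (congrArg _ ?_))
    refine Multiset.filter_congr fun x _ => ?_
    simp only [Function.comp_apply, ne_eq, mul_eq_zero, not_or]
    constructor
    · intro hx; exact ⟨hx, hσ.ne'⟩
    · intro hx; exact hx.1
  -- apply the iteration
  have hres := iter (2 * n + 1) Mσ g 3 (by omega) hGg
  rw [← hceq] at hres
  have hb1 : max (3 - Multiset.card (Mσ.filter (· ≠ 0))) 1 = 1 := by omega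
  rw [hb1] at hres
  obtain ⟨hc0, hcs, hcdeg, hcmult⟩ := hres
  constructor
  · rw [splits_iff_card_roots.mp hcs, hcdeg]
  · rw [Multiset.nodup_iff_count_le_one]
    intro x
    rw [count_roots]
    exact hcmult x
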